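/- arXiv:2309.17281 — 3 statements merged into one kernel-verified Lean document; each statement's English description precedes it below -/
import Mathlib

section
/- If K₁ and K₂ are d×d positive semi-definite real matrices with all diagonal entries equal to 1, then the matrix-based α-order mutual information satisfies I_α(K₁; K₂) ≤ log d. -/
open Matrix Real

/-- Eigenvalues of a matrix (as given by the spectral theorem when it is Hermitian). -/
noncomputable def eigs {d : ℕ} (K : Matrix (Fin d) (Fin d) ℝ) : Fin d → ℝ :=
  if h : K.IsHermitian then h.eigenvalues else 0

/-- Von Neumann (matrix) entropy `H₁(K) = -tr((K/d) log (K/d))`, via the spectrum. -/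
noncomputable def vnEntropy {d : ℕ} (K : Matrix (Fin d) (Fin d) ℝ) : ℝ :=
  -∑ i, (eigs K i / d) * Real.log (eigs K i / d)

/-- Matrix-based α-order Rényi entropy `H_α(K) = (1/(1-α)) log tr((K/d)^α)`,
with the case α = 1 being the von Neumann entropy. -/
noncomputable def mEntropy {d : ℕ} (α : ℝ) (K : Matrix (Fin d) (Fin d) ℝ) : ℝ :=
  if α = 1 then vnEntropy K
  else (1 / (1 - α)) * Real.log (∑ i, (eigs K i / d) ^ α)

/-- Matrix logarithm of a Hermitian matrix via functional calculus. -/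
noncomputable def mlog {d : ℕ} (K : Matrix (Fin d) (Fin d) ℝ) : Matrix (Fin d) (Fin d) ℝ :=
  if h : K.IsHermitian then h.cfc Real.log else 0

/-- Matrix KL divergence `KL(A‖B) = tr[A(log A - log B)]`. -/
noncomputable def matKL {d : ℕ} (A B : Matrix (Fin d) (Fin d) ℝ) : ℝ :=
  (A * (mlog A - mlog B)).trace

namespace MMI

variable {d : ℕ}

lemma specEntry {A : Matrix (Fin d) (Fin d) ℝ} (hA : A.IsHermitian) (i j : Fin d) :
    A i j = ∑ l, hA.eigenvalues l *
      ((hA.eigenvectorUnitary : Matrix (Fin d) (Fin d) ℝ) i l *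
       (hA.eigenvectorUnitary : Matrix (Fin d) (Fin d) ℝ) j l) := by
  conv_lhs => rw [hA.spectral_theorem, Unitary.conjStarAlgAut_apply]
  rw [Matrix.mul_apply]
  refine Finset.sum_congr rfl fun l _ => ?_
  rw [Matrix.mul_diagonal]
  simp [Matrix.conjTranspose_apply, Matrix.star_apply, Function.comp]
  ring

lemma orth {A : Matrix (Fin d) (Fin d) ℝ} (hA : A.IsHermitian) (l l' : Fin d) :
    ∑ i, (hA.eigenvectorUnitary : Matrix (Fin d) (Fin d) ℝ) i l *
      (hA.eigenvectorUnitary : Matrix (Fin d) (Fin d) ℝ) i l'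
      = if l = l' then 1 else 0 := by
  have h := (Matrix.mem_unitaryGroup_iff'.mp hA.eigenvectorUnitary.2)
  have := congrFun (congrFun (congrArg (fun M => (M : Matrix (Fin d) (Fin d) ℝ)) h) l) l'
  simp [Matrix.mul_apply, Matrix.conjTranspose_apply, Matrix.one_apply] at this
  simpa [Matrix.one_apply] using this

lemma compl {A : Matrix (Fin d) (Fin d) ℝ} (hA : A.IsHermitian) (i j : Fin d) :
    ∑ l, (hA.eigenvectorUnitary : Matrix (Fin d) (Fin d) ℝ) i l *
      (hA.eigenvectorUnitary : Matrix (Fin d) (Fin d) ℝ) j l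
      = if i = j then 1 else 0 := by
  have h := (Matrix.mem_unitaryGroup_iff.mp hA.eigenvectorUnitary.2)
  have := congrFun (congrFun (congrArg (fun M => (M : Matrix (Fin d) (Fin d) ℝ)) h) i) j
  simp [Matrix.mul_apply, Matrix.conjTranspose_apply, Matrix.one_apply] at this
  simpa [Matrix.one_apply] using this

end MMI

namespace MMI
variable {d : ℕ}

lemma eig_quad {A : Matrix (Fin d) (Fin d) ℝ} (hA : A.IsHermitian) (k : Fin d) :
    hA.eigenvalues k = ∑ i, ∑ j,
      (hA.eigenvectorUnitary : Matrix (Fin d) (Fin d) ℝ) i k * A i j *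
      (hA.eigenvectorUnitary : Matrix (Fin d) (Fin d) ℝ) j k := by
  set U := (hA.eigenvectorUnitary : Matrix (Fin d) (Fin d) ℝ) with hU
  have hv := hA.mulVec_eigenvectorBasis k
  have hcol : (fun j => U j k) = ⇑(hA.eigenvectorBasis k) := by
    funext j; simp [hU]
  have key : ∀ i, ∑ j, A i j * U j k = hA.eigenvalues k * U i k := by
    intro i
    have h1 := congrFun hv i
    simp only [Matrix.mulVec, dotProduct, Pi.smul_apply, smul_eq_mul] at h1
    rw [← hcol] at h1
    simpa using h1
  symm
  calc ∑ i, ∑ j, U i k * A i j * U j k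
      = ∑ i, U i k * (hA.eigenvalues k * U i k) := by
        refine Finset.sum_congr rfl fun i _ => ?_
        rw [← key i, Finset.mul_sum]
        exact Finset.sum_congr rfl fun j _ => by ring
    _ = hA.eigenvalues k * ∑ i, U i k * U i k := by
        rw [Finset.mul_sum]; exact Finset.sum_congr rfl fun i _ => by ring
    _ = hA.eigenvalues k := by rw [orth hA k k]; simp

end MMI

namespace MMI
variable {d : ℕ}

/-- Doubly stochastic representation of eigenvalues of a Hadamard product. -/
lemma hadamard_DS {A B : Matrix (Fin d) (Fin d) ℝ} (hA : A.IsHermitian)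
    (hB : B.PosSemidef) (hBdiag : ∀ i, B i i = 1)
    (hM : (A.hadamard B).IsHermitian) :
    ∃ S : Fin d → Fin d → ℝ, (∀ k l, 0 ≤ S k l) ∧ (∀ k, ∑ l, S k l = 1) ∧
      (∀ l, ∑ k, S k l = 1) ∧
      (∀ k, hM.eigenvalues k = ∑ l, S k l * hA.eigenvalues l) := by
  set V := (hA.eigenvectorUnitary : Matrix (Fin d) (Fin d) ℝ) with hV
  set W := (hM.eigenvectorUnitary : Matrix (Fin d) (Fin d) ℝ) with hW
  refine ⟨fun k l => ∑ i, ∑ j, (W i k * V i l) * B i j * (V j l * W j k), ?_, ?_, ?_, ?_⟩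
  · intro k l
    have h := hB.dotProduct_mulVec_nonneg (fun i => W i k * V i l)
    simp only [dotProduct, Matrix.mulVec, star_trivial] at h
    calc (0:ℝ) ≤ ∑ i, (W i k * V i l) * ∑ j, B i j * (W j k * V j l) := h
        _ = ∑ i, ∑ j, (W i k * V i l) * B i j * (V j l * W j k) := by
          refine Finset.sum_congr rfl fun i _ => ?_
          rw [Finset.mul_sum]; exact Finset.sum_congr rfl fun j _ => by ring
  · intro k
    calc ∑ l, ∑ i, ∑ j, (W i k * V i l) * B i j * (V j l * W j k)
        = ∑ i, ∑ j, (W i k * B i j * W j k) * ∑ l, V i l * V j l := by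
          rw [Finset.sum_comm]
          refine Finset.sum_congr rfl fun i _ => ?_
          rw [Finset.sum_comm]
          refine Finset.sum_congr rfl fun j _ => ?_
          rw [Finset.mul_sum]; exact Finset.sum_congr rfl fun l _ => by ring
      _ = ∑ i, W i k * W i k := by
          refine Finset.sum_congr rfl fun i _ => ?_
          rw [Finset.sum_eq_single i]
          · rw [compl hA i i]; simp [hBdiag i]
          · intro j _ hj
            rw [compl hA i j, if_neg (fun h => hj h.symm)]; ring
          · intro h; exact absurd (Finset.mem_univ i) h
      _ = 1 := by rw [orth hM k k]; simp
  · intro l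
    calc ∑ k, ∑ i, ∑ j, (W i k * V i l) * B i j * (V j l * W j k)
        = ∑ i, ∑ j, (V i l * B i j * V j l) * ∑ k, W i k * W j k := by
          rw [Finset.sum_comm]
          refine Finset.sum_congr rfl fun i _ => ?_
          rw [Finset.sum_comm]
          refine Finset.sum_congr rfl fun j _ => ?_
          rw [Finset.mul_sum]; exact Finset.sum_congr rfl fun k _ => by ring
      _ = ∑ i, V i l * V i l := by
          refine Finset.sum_congr rfl fun i _ => ?_
          rw [Finset.sum_eq_single i]
          · rw [compl hM i i]; simp [hBdiag i]
          · intro j _ hj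
            rw [compl hM i j, if_neg (fun h => hj h.symm)]; ring
          · intro h; exact absurd (Finset.mem_univ i) h
      _ = 1 := by rw [orth hA l l]; simp
  · intro k
    rw [eig_quad hM k]
    calc ∑ i, ∑ j, W i k * (A.hadamard B) i j * W j k
        = ∑ i, ∑ j, ∑ l, ((W i k * V i l) * B i j * (V j l * W j k)) * hA.eigenvalues l := by
          refine Finset.sum_congr rfl fun i _ => Finset.sum_congr rfl fun j _ => ?_
          rw [Matrix.hadamard_apply, specEntry hA i j]
          simp only [Finset.sum_mul, Finset.mul_sum]
          exact Finset.sum_congr rfl fun l _ => by ring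
      _ = ∑ i, ∑ l, ∑ j, ((W i k * V i l) * B i j * (V j l * W j k)) * hA.eigenvalues l := by
          exact Finset.sum_congr rfl fun i _ => Finset.sum_comm
      _ = ∑ l, ∑ i, ∑ j, ((W i k * V i l) * B i j * (V j l * W j k)) * hA.eigenvalues l := by exact Finset.sum_comm
      _ = ∑ l, (∑ i, ∑ j, (W i k * V i l) * B i j * (V j l * W j k)) * hA.eigenvalues l := by
          refine Finset.sum_congr rfl fun l _ => ?_
          rw [Finset.sum_mul]
          exact Finset.sum_congr rfl fun i _ => (Finset.sum_mul _ _ _).symm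

end MMI

namespace MMI
variable {d : ℕ}

lemma sum_eigs_eq {K : Matrix (Fin d) (Fin d) ℝ} (hK : K.IsHermitian)
    (hdiag : ∀ i, K i i = 1) : ∑ l, hK.eigenvalues l = d := by
  have h1 : (d:ℝ) = ∑ i : Fin d, K i i := by simp [hdiag]
  rw [h1]
  symm
  calc ∑ i : Fin d, K i i
      = ∑ i : Fin d, ∑ l, hK.eigenvalues l *
          ((hK.eigenvectorUnitary : Matrix (Fin d) (Fin d) ℝ) i l *
           (hK.eigenvectorUnitary : Matrix (Fin d) (Fin d) ℝ) i l) :=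
        Finset.sum_congr rfl fun i _ => specEntry hK i i
    _ = ∑ l, hK.eigenvalues l * ∑ i, (hK.eigenvectorUnitary : Matrix (Fin d) (Fin d) ℝ) i l *
          (hK.eigenvectorUnitary : Matrix (Fin d) (Fin d) ℝ) i l := by
        rw [Finset.sum_comm]
        exact Finset.sum_congr rfl fun l _ => (Finset.mul_sum _ _ _).symm
    _ = ∑ l, hK.eigenvalues l := by
        refine Finset.sum_congr rfl fun l _ => ?_
        rw [orth hK l l]; simp

lemma ds_sum_f_le {f : ℝ → ℝ} (hf : ConvexOn ℝ (Set.Ici 0) f)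
    {S : Fin d → Fin d → ℝ} {lam nu : Fin d → ℝ}
    (hS0 : ∀ k l, 0 ≤ S k l) (hrow : ∀ k, ∑ l, S k l = 1) (hcol : ∀ l, ∑ k, S k l = 1)
    (hlam : ∀ l, 0 ≤ lam l) (hnu : ∀ k, nu k = ∑ l, S k l * lam l) :
    ∑ k, f (nu k) ≤ ∑ l, f (lam l) := by
  have step : ∀ k, f (nu k) ≤ ∑ l, S k l * f (lam l) := by
    intro k
    have h := hf.map_sum_le (t := Finset.univ) (w := S k) (p := lam)
      (fun i _ => hS0 k i) (hrow k) (fun i _ => hlam i)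
    simpa [smul_eq_mul, ← hnu k] using h
  calc ∑ k, f (nu k) ≤ ∑ k, ∑ l, S k l * f (lam l) :=
        Finset.sum_le_sum fun k _ => step k
    _ = ∑ l, (∑ k, S k l) * f (lam l) := by
        rw [Finset.sum_comm]
        exact Finset.sum_congr rfl fun l _ => (Finset.sum_mul _ _ _).symm
    _ = ∑ l, f (lam l) := by simp [hcol]

lemma ds_sum_f_ge {f : ℝ → ℝ} (hf : ConcaveOn ℝ (Set.Ici 0) f)
    {S : Fin d → Fin d → ℝ} {lam nu : Fin d → ℝ}
    (hS0 : ∀ k l, 0 ≤ S k l) (hrow : ∀ k, ∑ l, S k l = 1) (hcol : ∀ l, ∑ k, S k l = 1)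
    (hlam : ∀ l, 0 ≤ lam l) (hnu : ∀ k, nu k = ∑ l, S k l * lam l) :
    ∑ l, f (lam l) ≤ ∑ k, f (nu k) := by
  have h := ds_sum_f_le hf.neg hS0 hrow hcol hlam hnu
  simp only [Pi.neg_apply, Finset.sum_neg_distrib, neg_le_neg_iff] at h
  exact h

lemma jensen_unif {f : ℝ → ℝ} (hf : ConvexOn ℝ (Set.Ici 0) f) (hd : 0 < d)
    {q : Fin d → ℝ} (hq0 : ∀ i, 0 ≤ q i) (hsum : ∑ i, q i = 1) :
    f (1 / d) ≤ (1 / d) * ∑ i, f (q i) := by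
  have hcd : (0:ℝ) < d := Nat.cast_pos.mpr hd
  have h := hf.map_sum_le (t := Finset.univ) (w := fun _ : Fin d => (1:ℝ) / d) (p := q)
    (fun i _ => by positivity) (by
      rw [Finset.sum_const]
      simp [Finset.card_univ]
      field_simp) (fun i _ => hq0 i)
  have h2 : ∑ i, ((1:ℝ)/d) • q i = 1 / d := by
    simp only [smul_eq_mul, ← Finset.mul_sum, hsum, mul_one]
  rw [h2] at h
  simpa [Finset.mul_sum] using h

lemma jensen_unif' {f : ℝ → ℝ} (hf : ConcaveOn ℝ (Set.Ici 0) f) (hd : 0 < d)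
    {q : Fin d → ℝ} (hq0 : ∀ i, 0 ≤ q i) (hsum : ∑ i, q i = 1) :
    (1 / d) * ∑ i, f (q i) ≤ f (1 / d) := by
  have h := jensen_unif hf.neg hd hq0 hsum
  simp only [Pi.neg_apply, Finset.sum_neg_distrib, mul_neg, neg_le_neg_iff] at h
  exact h

end MMI

namespace MMI
variable {d : ℕ}

lemma sumq_pos (α : ℝ) {q : Fin d → ℝ} (hq0 : ∀ i, 0 ≤ q i) (hqsum : ∑ i, q i = 1) :
    0 < ∑ i, q i ^ α := by
  obtain ⟨i, hi⟩ : ∃ i, 0 < q i := by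
    by_contra h
    push_neg at h
    have h0 : ∑ i, q i = 0 := Finset.sum_eq_zero fun i _ => le_antisymm (h i) (hq0 i)
    rw [hqsum] at h0; norm_num at h0
  exact Finset.sum_pos' (fun j _ => Real.rpow_nonneg (hq0 j) α)
    ⟨i, Finset.mem_univ i, Real.rpow_pos_of_pos hi α⟩

lemma log_c_mul : ∀ (c α : ℝ), 0 < c →
    Real.log (c * (1/c) ^ α) = (1 - α) * Real.log c := by
  intro c α hc
  rw [Real.log_mul hc.ne' (by positivity), Real.log_rpow (by positivity), one_div,
    Real.log_inv]
  ring

end MMI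

namespace MMI
variable {d : ℕ}

lemma mEntropy_le_log (hd : 0 < d) {α : ℝ} (hα : 0 < α)
    {K : Matrix (Fin d) (Fin d) ℝ} (hK : K.PosSemidef) (hdiag : ∀ i, K i i = 1) :
    mEntropy α K ≤ Real.log d := by
  have hc : (0:ℝ) < d := Nat.cast_pos.mpr hd
  have he : eigs K = hK.1.eigenvalues := dif_pos hK.1
  have hq0 : ∀ i, 0 ≤ eigs K i / (d:ℝ) := fun i =>
    div_nonneg (by rw [he]; exact hK.eigenvalues_nonneg i) hc.le
  have hqsum : ∑ i, eigs K i / (d:ℝ) = 1 := by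
    rw [← Finset.sum_div, show ∑ i, eigs K i = (d:ℝ) from by
      rw [he]; exact sum_eigs_eq hK.1 hdiag]
    exact div_self hc.ne'
  rw [mEntropy]
  split_ifs with h1
  · rw [vnEntropy]
    have hj := jensen_unif Real.convexOn_mul_log hd hq0 hqsum
    have h2 : Real.log (1/(d:ℝ)) ≤ ∑ i, (eigs K i / d) * Real.log (eigs K i / d) :=
      (mul_le_mul_iff_right₀ (show (0:ℝ) < 1/d by positivity)).mp hj
    have hlog : Real.log (1/(d:ℝ)) = -Real.log d := by rw [one_div, Real.log_inv]
    linarith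
  · rcases lt_or_gt_of_ne h1 with hlt | hgt
    · have hj := jensen_unif' (Real.concaveOn_rpow hα.le hlt.le) hd hq0 hqsum
      have hT : ∑ i, (eigs K i / d) ^ α ≤ (d:ℝ) * ((1:ℝ)/d) ^ α := by
        have h3 := mul_le_mul_of_nonneg_left hj hc.le
        rw [← mul_assoc, mul_one_div, div_self hc.ne', one_mul] at h3
        exact h3
      have hlogT : Real.log (∑ i, (eigs K i / d) ^ α) ≤ (1 - α) * Real.log d :=
        le_trans (Real.log_le_log (sumq_pos α hq0 hqsum) hT)
          (le_of_eq (log_c_mul _ _ hc))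
      have h1α : (0:ℝ) < 1 - α := by linarith
      calc (1/(1-α)) * Real.log (∑ i, (eigs K i / d) ^ α)
          ≤ (1/(1-α)) * ((1-α) * Real.log d) :=
            mul_le_mul_of_nonneg_left hlogT (by positivity)
        _ = Real.log d := by field_simp
    · have hj := jensen_unif (convexOn_rpow hgt.le) hd hq0 hqsum
      have hT : (d:ℝ) * ((1:ℝ)/d) ^ α ≤ ∑ i, (eigs K i / d) ^ α := by
        have h3 := mul_le_mul_of_nonneg_left hj hc.le
        rw [← mul_assoc, mul_one_div, div_self hc.ne', one_mul] at h3
        exact h3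
      have hlogT : (1 - α) * Real.log d ≤ Real.log (∑ i, (eigs K i / d) ^ α) :=
        le_trans (le_of_eq (log_c_mul _ _ hc).symm)
          (Real.log_le_log (by positivity) hT)
      have h1α : (1:ℝ) - α < 0 := by linarith
      have hnp : (1:ℝ)/(1-α) ≤ 0 := le_of_lt (div_neg_of_pos_of_neg one_pos h1α)
      calc (1/(1-α)) * Real.log (∑ i, (eigs K i / d) ^ α)
          ≤ (1/(1-α)) * ((1-α) * Real.log d) :=
            mul_le_mul_of_nonpos_left hlogT hnp
        _ = Real.log d := by
            have : (1:ℝ) - α ≠ 0 := ne_of_lt h1α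
            field_simp

end MMI

namespace MMI
variable {d : ℕ}

lemma mEntropy_le_hadamard (hd : 0 < d) {α : ℝ} (hα : 0 < α)
    {K₁ K₂ : Matrix (Fin d) (Fin d) ℝ}
    (hK₁ : K₁.PosSemidef) (hK₂ : K₂.PosSemidef)
    (hdiag₁ : ∀ i, K₁ i i = 1) (hdiag₂ : ∀ i, K₂ i i = 1) :
    mEntropy α K₁ ≤ mEntropy α (K₁.hadamard K₂) := by
  have hc : (0:ℝ) < d := Nat.cast_pos.mpr hd
  have hHM : (K₁.hadamard K₂).IsHermitian := by
    rw [Matrix.IsHermitian]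
    ext i j
    simp only [Matrix.conjTranspose_apply, Matrix.hadamard_apply, star_trivial]
    rw [← hK₁.1.apply i j, ← hK₂.1.apply i j, star_trivial, star_trivial]
  have he₁ : eigs K₁ = hK₁.1.eigenvalues := dif_pos hK₁.1
  have heM : eigs (K₁.hadamard K₂) = hHM.eigenvalues := dif_pos hHM
  obtain ⟨S, hS0, hrow, hcol, hev⟩ := hadamard_DS hK₁.1 hK₂ hdiag₂ hHM
  have hlam0 : ∀ l, 0 ≤ eigs K₁ l / (d:ℝ) := fun l =>
    div_nonneg (by rw [he₁]; exact hK₁.eigenvalues_nonneg l) hc.le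
  have hlsum : ∑ l, eigs K₁ l / (d:ℝ) = 1 := by
    rw [← Finset.sum_div, show ∑ l, eigs K₁ l = (d:ℝ) from by
      rw [he₁]; exact sum_eigs_eq hK₁.1 hdiag₁]
    exact div_self hc.ne'
  have hnu_rel : ∀ k, eigs (K₁.hadamard K₂) k / (d:ℝ) = ∑ l, S k l * (eigs K₁ l / d) := by
    intro k
    rw [heM, hev k, Finset.sum_div]
    exact Finset.sum_congr rfl fun l _ => by rw [he₁, mul_div_assoc]
  have hnu0 : ∀ k, 0 ≤ eigs (K₁.hadamard K₂) k / (d:ℝ) := fun k => by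
    rw [hnu_rel k]
    exact Finset.sum_nonneg fun l _ => mul_nonneg (hS0 k l) (hlam0 l)
  have hnsum : ∑ k, eigs (K₁.hadamard K₂) k / (d:ℝ) = 1 := by
    calc ∑ k, eigs (K₁.hadamard K₂) k / (d:ℝ)
        = ∑ k, ∑ l, S k l * (eigs K₁ l / d) := Finset.sum_congr rfl fun k _ => hnu_rel k
      _ = ∑ l, (∑ k, S k l) * (eigs K₁ l / d) := by
          rw [Finset.sum_comm]
          exact Finset.sum_congr rfl fun l _ => (Finset.sum_mul _ _ _).symm
      _ = 1 := by simp only [hcol, one_mul]; exact hlsum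
  rw [mEntropy, mEntropy]
  split_ifs with h1
  · rw [vnEntropy, vnEntropy]
    have h := ds_sum_f_le Real.convexOn_mul_log hS0 hrow hcol hlam0 hnu_rel
    exact neg_le_neg h
  · rcases lt_or_gt_of_ne h1 with hlt | hgt
    · have h := ds_sum_f_ge (Real.concaveOn_rpow hα.le hlt.le) hS0 hrow hcol hlam0 hnu_rel
      have hlog := Real.log_le_log (sumq_pos α hlam0 hlsum) h
      exact mul_le_mul_of_nonneg_left hlog (by
        have : (0:ℝ) < 1 - α := by linarith
        positivity)
    · have h := ds_sum_f_le (convexOn_rpow hgt.le) hS0 hrow hcol hlam0 hnu_rel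
      have hlog := Real.log_le_log (sumq_pos α hnu0 hnsum) h
      have hnp : (1:ℝ)/(1-α) ≤ 0 :=
        le_of_lt (div_neg_of_pos_of_neg one_pos (by linarith))
      exact mul_le_mul_of_nonpos_left hlog hnp

end MMI

theorem matrix_mutual_information_le_log_dim {d : ℕ} (hd : 0 < d) (α : ℝ) (hα : 0 < α)
    (K₁ K₂ : Matrix (Fin d) (Fin d) ℝ)
    (hK₁ : K₁.PosSemidef) (hK₂ : K₂.PosSemidef)
    (hdiag₁ : ∀ i, K₁ i i = 1) (hdiag₂ : ∀ i, K₂ i i = 1) :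
    mEntropy α K₁ + mEntropy α K₂ - mEntropy α (K₁.hadamard K₂) ≤ Real.log d := by
  have h1 := MMI.mEntropy_le_hadamard hd hα hK₁ hK₂ hdiag₁ hdiag₂
  have h2 := MMI.mEntropy_le_log hd hα hK₂ hdiag₂
  linarith
end

section
/- For d×d PSD matrices K₁, K₂ with unit diagonals, the joint matrix entropy is bounded below by each marginal: max{H_α(K₁), H_α(K₂)} ≤ H_α(K₁ ⊙ K₂), for α-order Rényi matrix entropy. -/
open Matrix Real

/-- Spectral data of a real symmetric matrix, entrywise. -/
lemma spectral_package {d : ℕ} (K : Matrix (Fin d) (Fin d) ℝ) (hK : K.IsHermitian) :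
    ∃ V : Fin d → Fin d → ℝ,
      (∀ p q, K p q = ∑ i, hK.eigenvalues i * (V i p * V i q)) ∧
      (∀ i i', ∑ p, V i p * V i' p = if i = i' then 1 else 0) ∧
      (∀ p q, ∑ i, V i p * V i q = if p = q then 1 else 0) ∧
      (∀ j, hK.eigenvalues j = ∑ p, ∑ q, V j p * K p q * V j q) := by
  have hsym : ∀ p q : Fin d, K q p = K p q := fun p q => by
    conv_lhs => rw [← hK]
    simp [conjTranspose_apply]
  refine ⟨fun i p => (hK.eigenvectorUnitary : Matrix (Fin d) (Fin d) ℝ) p i, ?_, ?_, ?_, ?_⟩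
  · intro p q
    conv_lhs => rw [hK.spectral_theorem]
    simp [mul_apply, diagonal, Finset.sum_mul, mul_comm, mul_assoc, mul_left_comm]
  · intro i i'
    have h : (star (hK.eigenvectorUnitary : Matrix (Fin d) (Fin d) ℝ))
        * (hK.eigenvectorUnitary : Matrix (Fin d) (Fin d) ℝ) = 1 := Unitary.coe_star_mul_self _
    have := congrFun (congrFun h i) i'
    simpa [mul_apply, one_apply, mul_comm] using this
  · intro p q
    have h : (hK.eigenvectorUnitary : Matrix (Fin d) (Fin d) ℝ)
        * (star (hK.eigenvectorUnitary : Matrix (Fin d) (Fin d) ℝ)) = 1 :=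
      (Matrix.mem_unitaryGroup_iff).mp (hK.eigenvectorUnitary).2
    have := congrFun (congrFun h p) q
    simpa [mul_apply, one_apply, mul_comm] using this
  · intro j
    have h := hK.conjStarAlgAut_star_eigenvectorUnitary
    rw [Unitary.conjStarAlgAut_apply, Unitary.coe_star, star_star] at h
    have := congrFun (congrFun h j) j
    simp [mul_apply, diagonal, Finset.sum_mul, mul_comm, mul_assoc, mul_left_comm] at this
    rw [← this]
    simp only [Matrix.IsHermitian.eigenvectorUnitary_apply]
    simp_rw [Finset.mul_sum]
    rw [Finset.sum_comm]
    refine Finset.sum_congr rfl fun y _ => Finset.sum_congr rfl fun x _ => ?_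
    rw [hsym]
    ring

lemma isHermitian_hadamard {d : ℕ} {A B : Matrix (Fin d) (Fin d) ℝ}
    (hA : A.IsHermitian) (hB : B.IsHermitian) : (A.hadamard B).IsHermitian := by
  have hsA : ∀ p q : Fin d, A q p = A p q := fun p q => by
    conv_lhs => rw [← hA]; simp [conjTranspose_apply]
  have hsB : ∀ p q : Fin d, B q p = B p q := fun p q => by
    conv_lhs => rw [← hB]; simp [conjTranspose_apply]
  ext p q
  simp [conjTranspose_apply, Matrix.hadamard_apply, hsA, hsB]

/-- Core majorization/Jensen step. -/
lemma core {d : ℕ} (A B : Matrix (Fin d) (Fin d) ℝ) (hA : A.PosSemidef) (hB : B.PosSemidef)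
    (hdB : ∀ i, B i i = 1) :
    (∀ j, 0 ≤ eigs (A.hadamard B) j) ∧
    (∑ j, eigs (A.hadamard B) j = ∑ i, eigs A i) ∧
    (∀ f : ℝ → ℝ, ConvexOn ℝ (Set.Ici 0) f →
      ∑ j, f (eigs (A.hadamard B) j) ≤ ∑ i, f (eigs A i)) := by
  have hC : (A.hadamard B).IsHermitian := isHermitian_hadamard hA.1 hB.1
  obtain ⟨V, hVa, hVb, hVc, _⟩ := spectral_package A hA.1
  obtain ⟨W, _, hWb, hWc, hWd⟩ := spectral_package (A.hadamard B) hC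
  set lam := hA.1.eigenvalues with hlam
  set mu := hC.eigenvalues with hmu'
  set S : Fin d → Fin d → ℝ :=
    fun j i => ∑ p, ∑ q, (W j p * V i p) * B p q * (W j q * V i q) with hS
  have hS0 : ∀ j i, 0 ≤ S j i := by
    intro j i
    have h := hB.dotProduct_mulVec_nonneg (fun p => W j p * V i p)
    rw [hS]
    convert h using 1
    · rfl
    simp only [star, dotProduct, mulVec, Pi.star_apply, star_trivial, id]
    refine Finset.sum_congr rfl fun p _ => ?_
    rw [Finset.mul_sum]
    exact Finset.sum_congr rfl fun q _ => by ring
  have hrow : ∀ j, ∑ i, S j i = 1 := by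
    intro j
    have h1 : ∑ i, S j i
        = ∑ p, ∑ q, (W j p * B p q * W j q) * ∑ i, V i p * V i q := by
      rw [Finset.sum_comm]
      refine Finset.sum_congr rfl fun p _ => ?_
      rw [Finset.sum_comm]
      refine Finset.sum_congr rfl fun q _ => ?_
      rw [Finset.mul_sum]
      exact Finset.sum_congr rfl fun i _ => by ring
    rw [h1]
    simp_rw [hVc, mul_ite, mul_one, mul_zero, Finset.sum_ite_eq, Finset.mem_univ, if_true]
    simp_rw [hdB, mul_one]
    simpa using hWb j j
  have hcol : ∀ i, ∑ j, S j i = 1 := by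
    intro i
    have h1 : ∑ j, S j i
        = ∑ p, ∑ q, (V i p * B p q * V i q) * ∑ j, W j p * W j q := by
      rw [Finset.sum_comm]
      refine Finset.sum_congr rfl fun p _ => ?_
      rw [Finset.sum_comm]
      refine Finset.sum_congr rfl fun q _ => ?_
      rw [Finset.mul_sum]
      exact Finset.sum_congr rfl fun j _ => by ring
    rw [h1]
    simp_rw [hWc, mul_ite, mul_one, mul_zero, Finset.sum_ite_eq, Finset.mem_univ, if_true]
    simp_rw [hdB, mul_one]
    simpa using hVb i i
  have tri : ∀ G : Fin d → Fin d → Fin d → ℝ,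
      (∑ p, ∑ q, ∑ i, G p q i) = ∑ i, ∑ p, ∑ q, G p q i := by
    intro G
    calc (∑ p, ∑ q, ∑ i, G p q i) = ∑ p, ∑ i, ∑ q, G p q i :=
          Finset.sum_congr rfl fun p _ => Finset.sum_comm
      _ = ∑ i, ∑ p, ∑ q, G p q i := Finset.sum_comm
  have hmu : ∀ j, mu j = ∑ i, S j i * lam i := by
    intro j
    have h1 : ∀ p q : Fin d, W j p * (A.hadamard B) p q * W j q
        = ∑ i, ((W j p * V i p) * B p q * (W j q * V i q)) * lam i := by
      intro p q
      rw [Matrix.hadamard_apply, hVa p q, Finset.sum_mul, Finset.mul_sum, Finset.sum_mul]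
      refine Finset.sum_congr rfl fun i _ => by ring
    rw [hmu']
    rw [show hC.eigenvalues j = ∑ p, ∑ q, W j p * (A.hadamard B) p q * W j q from hWd j]
    simp_rw [h1]
    rw [tri]
    refine Finset.sum_congr rfl fun i _ => ?_
    rw [hS, Finset.sum_mul]
    exact Finset.sum_congr rfl fun p _ => (Finset.sum_mul _ _ _).symm
  have hmu0 : ∀ j, 0 ≤ mu j := by
    intro j
    rw [hmu j]
    exact Finset.sum_nonneg fun i _ =>
      mul_nonneg (hS0 j i) (hA.eigenvalues_nonneg i)
  have heigsC : eigs (A.hadamard B) = mu := by unfold eigs; rw [dif_pos hC]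
  have heigsA : eigs A = lam := by unfold eigs; rw [dif_pos hA.1]
  refine ⟨?_, ?_, ?_⟩
  · intro j; rw [heigsC]; exact hmu0 j
  · rw [heigsC, heigsA]
    calc ∑ j, mu j = ∑ j, ∑ i, S j i * lam i := Finset.sum_congr rfl fun j _ => hmu j
      _ = ∑ i, (∑ j, S j i) * lam i := by
          rw [Finset.sum_comm]
          exact Finset.sum_congr rfl fun i _ => (Finset.sum_mul _ _ _).symm
      _ = ∑ i, lam i := by simp_rw [hcol, one_mul]
  · intro f hf
    rw [heigsC, heigsA]
    have hJ : ∀ j, f (mu j) ≤ ∑ i, S j i * f (lam i) := by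
      intro j
      have := hf.map_sum_le (fun i _ => hS0 j i) (hrow j)
        (fun i _ => Set.mem_Ici.mpr (hA.eigenvalues_nonneg i))
      simp only [smul_eq_mul] at this
      rw [hmu j]
      exact this
    calc ∑ j, f (mu j) ≤ ∑ j, ∑ i, S j i * f (lam i) :=
          Finset.sum_le_sum fun j _ => hJ j
      _ = ∑ i, (∑ j, S j i) * f (lam i) := by
          rw [Finset.sum_comm]
          exact Finset.sum_congr rfl fun i _ => (Finset.sum_mul _ _ _).symm
      _ = ∑ i, f (lam i) := by simp_rw [hcol, one_mul]

lemma sum_eigs_eq_trace {d : ℕ} (K : Matrix (Fin d) (Fin d) ℝ) (hK : K.IsHermitian) :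
    ∑ i, eigs K i = K.trace := by
  unfold eigs
  rw [dif_pos hK]
  conv_rhs => rw [hK.spectral_theorem]
  rw [Unitary.conjStarAlgAut_apply, Matrix.trace_mul_cycle, Unitary.coe_star_mul_self]
  simp [Matrix.trace, mul_apply]

lemma convexOn_comp_div {d : ℕ} (hd : 0 < d) {g : ℝ → ℝ} (hg : ConvexOn ℝ (Set.Ici 0) g) :
    ConvexOn ℝ (Set.Ici 0) (fun x => g (x / (d : ℝ))) := by
  have dpos : (0:ℝ) < d := Nat.cast_pos.mpr hd
  refine ⟨convex_Ici 0, fun {x} hx {y} hy {a} {b} ha hb hab => ?_⟩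
  have h2 := hg.2 (Set.mem_Ici.mpr (div_nonneg (Set.mem_Ici.mp hx) dpos.le))
    (Set.mem_Ici.mpr (div_nonneg (Set.mem_Ici.mp hy) dpos.le)) ha hb hab
  simp only [smul_eq_mul] at h2 ⊢
  have h3 : (a * x + b * y) / (d:ℝ) = a * (x/(d:ℝ)) + b * (y/(d:ℝ)) := by ring
  rw [h3]
  exact h2

lemma sum_div_rpow_pos {d : ℕ} (hd : 0 < d) (α : ℝ) (v : Fin d → ℝ) (hv : ∀ i, 0 ≤ v i)
    (hsum : 0 < ∑ i, v i) : 0 < ∑ i, (v i / d) ^ α := by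
  have dpos : (0:ℝ) < d := Nat.cast_pos.mpr hd
  have : ∃ i, 0 < v i := by
    by_contra h
    push_neg at h
    exact absurd (Finset.sum_nonpos fun i _ => h i) (not_le.mpr hsum)
  obtain ⟨i0, hi0⟩ := this
  refine Finset.sum_pos' (fun i _ => Real.rpow_nonneg (div_nonneg (hv i) dpos.le) α)
    ⟨i0, Finset.mem_univ i0, Real.rpow_pos_of_pos (div_pos hi0 dpos) α⟩

lemma mEntropy_mono {d : ℕ} (hd : 0 < d) (α : ℝ) (hα : 0 < α)
    (A B : Matrix (Fin d) (Fin d) ℝ) (hA : A.PosSemidef) (hB : B.PosSemidef)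
    (hdA : ∀ i, A i i = 1) (hdB : ∀ i, B i i = 1) :
    mEntropy α A ≤ mEntropy α (A.hadamard B) := by
  have dpos : (0:ℝ) < d := Nat.cast_pos.mpr hd
  obtain ⟨hmu0, hsum, hcore⟩ := core A B hA hB hdB
  have hlam0 : ∀ i, 0 ≤ eigs A i := by
    unfold eigs
    rw [dif_pos hA.1]
    exact hA.eigenvalues_nonneg
  have htrA : ∑ i, eigs A i = (d : ℝ) := by
    rw [sum_eigs_eq_trace A hA.1]
    simp [Matrix.trace, Matrix.diag, hdA]
  have hAp : 0 < ∑ i, eigs A i := htrA ▸ dpos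
  have hCp : 0 < ∑ j, eigs (A.hadamard B) j := hsum ▸ hAp
  by_cases h1 : α = 1
  · subst h1
    unfold mEntropy
    rw [if_pos rfl, if_pos rfl]
    unfold vnEntropy
    have hf : ConvexOn ℝ (Set.Ici 0) (fun x : ℝ => (x / d) * Real.log (x / d)) :=
      convexOn_comp_div hd Real.convexOn_mul_log
    have := hcore _ hf
    linarith
  · unfold mEntropy
    rw [if_neg h1, if_neg h1]
    rcases lt_or_gt_of_ne h1 with hlt | hgt
    · -- α < 1 : concave case
      have hf : ConvexOn ℝ (Set.Ici 0) (fun x : ℝ => -((x / d) ^ α)) := by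
        have : ConcaveOn ℝ (Set.Ici 0) (fun x : ℝ => x ^ α) :=
          (Real.strictConcaveOn_rpow hα hlt).concaveOn
        exact convexOn_comp_div hd this.neg
      have hle : ∑ i, (eigs A i / d) ^ α ≤ ∑ j, (eigs (A.hadamard B) j / d) ^ α := by
        have := hcore _ hf
        simp only [Finset.sum_neg_distrib] at this
        linarith
      have hlog := Real.log_le_log (sum_div_rpow_pos hd α _ hlam0 hAp) hle
      have hc : 0 ≤ 1 / (1 - α) := le_of_lt (div_pos one_pos (by linarith))
      exact mul_le_mul_of_nonneg_left hlog hc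
    · -- 1 < α : convex case
      have hf : ConvexOn ℝ (Set.Ici 0) (fun x : ℝ => (x / d) ^ α) :=
        convexOn_comp_div hd (convexOn_rpow hgt.le)
      have hle := hcore _ hf
      have hlog := Real.log_le_log (sum_div_rpow_pos hd α _ hmu0 hCp) hle
      have hc : 1 / (1 - α) ≤ 0 := by
        apply div_nonpos_of_nonneg_of_nonpos <;> linarith
      exact mul_le_mul_of_nonpos_left hlog hc

theorem max_entropy_le_joint_entropy {d : ℕ} (hd : 0 < d) (α : ℝ) (hα : 0 < α)
    (K₁ K₂ : Matrix (Fin d) (Fin d) ℝ)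
    (hK₁ : K₁.PosSemidef) (hK₂ : K₂.PosSemidef)
    (hdiag₁ : ∀ i, K₁ i i = 1) (hdiag₂ : ∀ i, K₂ i i = 1) :
    max (mEntropy α K₁) (mEntropy α K₂) ≤ mEntropy α (K₁.hadamard K₂) := by
  have h1 := mEntropy_mono hd α hα K₁ K₂ hK₁ hK₂ hdiag₁ hdiag₂
  have h2 := mEntropy_mono hd α hα K₂ K₁ hK₂ hK₁ hdiag₂ hdiag₁
  rw [Matrix.hadamard_comm] at h2
  exact max_le h1 h2
end

section
/- For d×d PSD matrices K₁, K₂ with unit diagonals and μ > 0, the joint total coding rate is superadditive: log det((μ²+2μ) I_d + K₁ ⊙ K₂) ≥ log det(μ I_d + K₁) + log det(μ I_d + K₂). -/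
open Matrix Real

open scoped MatrixOrder

section AuxMatrix
variable {m : Type*} {n : Type*} [Fintype m] [Fintype n] [DecidableEq m] [DecidableEq n]

lemma diag_pos' {M : Matrix n n ℝ} (hM : M.PosDef) (i : n) : 0 < M i i := by
  have := hM.dotProduct_mulVec_pos (x := (Pi.single i (1:ℝ) : n → ℝ))
    (fun h => by simpa using congrFun h i)
  simpa [dotProduct, mulVec, Pi.single_apply, Finset.sum_ite_eq'] using this

lemma posDef_of_det_ne_zero' {M : Matrix n n ℝ} (hM : M.PosSemidef) (h : M.det ≠ 0) :
    M.PosDef := by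
  refine Matrix.PosDef.of_dotProduct_mulVec_pos hM.1 fun x hx =>
    lt_of_le_of_ne (by simpa using hM.dotProduct_mulVec_nonneg x) fun heq => h ?_
  rw [← Matrix.exists_mulVec_eq_zero_iff]
  exact ⟨x, hx, (hM.dotProduct_mulVec_zero_iff x).mp (by simpa using heq.symm)⟩

lemma posDef_submatrix_inj {M : Matrix n n ℝ} (hM : M.PosDef) (f : m → n)
    (hf : Function.Injective f) : (M.submatrix f f).PosDef := by
  classical
  refine Matrix.PosDef.of_dotProduct_mulVec_pos (hM.1.submatrix f) fun x hx => ?_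
  set x' : n → ℝ := Function.extend f x 0 with hx'def
  have hxf : ∀ i, x' (f i) = x i := fun i => hf.extend_apply x 0 i
  have hx'vanish : ∀ j ∈ Finset.univ, j ∉ Finset.univ.image f → x' j = 0 := by
    intro j _ hj
    rw [hx'def, Function.extend_apply']
    · rfl
    · rintro ⟨i, rfl⟩
      exact hj (Finset.mem_image_of_mem f (Finset.mem_univ i))
  have hsum : ∀ g : n → ℝ, ∑ j, g j * x' j = ∑ i, g (f i) * x i := by
    intro g
    rw [← Finset.sum_subset (Finset.subset_univ (Finset.univ.image f))
      (fun j h1 h2 => by rw [hx'vanish j h1 h2, mul_zero]),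
      Finset.sum_image (fun a _ b _ h => hf h)]
    simp [hxf]
  have hx'0 : x' ≠ 0 := fun h0 => hx (funext fun i => by
    simpa [hxf i] using congrFun h0 (f i))
  have key : dotProduct (star x) ((M.submatrix f f) *ᵥ x)
      = dotProduct (star x') (M *ᵥ x') := by
    simp only [dotProduct, mulVec, star_trivial, submatrix_apply]
    calc ∑ i, x i * ∑ k, M (f i) (f k) * x k
        = ∑ i, (∑ j', M (f i) j' * x' j') * x i := by
          refine Finset.sum_congr rfl fun i _ => ?_
          rw [hsum (fun j' => M (f i) j'), mul_comm]
      _ = ∑ j, (∑ j', M j j' * x' j') * x' j :=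
          (hsum (fun j => ∑ j', M j j' * x' j')).symm
      _ = ∑ j, x' j * ∑ j', M j j' * x' j' :=
          Finset.sum_congr rfl fun j _ => mul_comm _ _
  rw [key]
  exact hM.dotProduct_mulVec_pos hx'0

/-- Schur product theorem over ℝ. -/
lemma posSemidef_hadamard {A B : Matrix n n ℝ} (hA : A.PosSemidef) (hB : B.PosSemidef) :
    (A.hadamard B).PosSemidef := by
  classical
  obtain ⟨C, hC⟩ : ∃ C : Matrix n n ℝ, A = Cᴴ * C := ⟨CFC.sqrt A, by
    rw [(CFC.sqrt_nonneg A).posSemidef.1.eq, CFC.sqrt_mul_sqrt_self A hA.nonneg]⟩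
  have hAij : ∀ i j, A i j = ∑ k, C k i * C k j := by
    intro i j
    rw [hC]
    simp [Matrix.mul_apply, conjTranspose_apply]
  refine Matrix.PosSemidef.of_dotProduct_mulVec_nonneg ?_ fun x => ?_
  · have h1 := hA.1; have h2 := hB.1
    ext i j
    simp only [conjTranspose_apply, Matrix.hadamard_apply, star_trivial]
    rw [← h1.apply j i, ← h2.apply j i]
    simp
  · simp only [star_trivial, dotProduct, mulVec, Matrix.hadamard_apply]
    have step1 : ∑ i, x i * ∑ j, A i j * B i j * x j
        = ∑ i, ∑ k, ∑ j, (x i * C k i) * B i j * (x j * C k j) := by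
      refine Finset.sum_congr rfl fun i _ => ?_
      rw [Finset.mul_sum, Finset.sum_comm]
      refine Finset.sum_congr rfl fun j _ => ?_
      rw [hAij i j, Finset.sum_mul, Finset.sum_mul, Finset.mul_sum]
      exact Finset.sum_congr rfl fun k _ => by ring
    rw [step1, Finset.sum_comm]
    refine Finset.sum_nonneg fun k _ => ?_
    have hq := hB.dotProduct_mulVec_nonneg (fun i => x i * C k i)
    simp only [star_trivial, dotProduct, mulVec] at hq
    calc (0:ℝ) ≤ ∑ i, (x i * C k i) * ∑ j, B i j * (x j * C k j) := hq
      _ = ∑ i, ∑ j, (x i * C k i) * B i j * (x j * C k j) := by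
          refine Finset.sum_congr rfl fun i _ => ?_
          rw [Finset.mul_sum]
          exact Finset.sum_congr rfl fun j _ => by ring

lemma psd_smul' {M : Matrix n n ℝ} (hM : M.PosSemidef) {r : ℝ} (hr : 0 ≤ r) :
    (r • M).PosSemidef := by
  refine Matrix.PosSemidef.of_dotProduct_mulVec_nonneg ?_ fun x => ?_
  · unfold Matrix.IsHermitian
    rw [conjTranspose_smul, hM.1]
    simp
  · rw [smul_mulVec, dotProduct_smul]
    exact mul_nonneg hr (by simpa using hM.dotProduct_mulVec_nonneg x)

lemma psd_vecMulVec (c : n → ℝ) : (vecMulVec c c).PosSemidef := by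
  refine Matrix.PosSemidef.of_dotProduct_mulVec_nonneg ?_ fun x => ?_
  · unfold Matrix.IsHermitian
    ext i j
    simp [vecMulVec_apply, conjTranspose_apply, mul_comm]
  · simp only [star_trivial, dotProduct, mulVec, vecMulVec_apply]
    have : ∑ i, x i * ∑ j, c i * c j * x j = (∑ i, c i * x i) * (∑ j, c j * x j) := by
      rw [Finset.sum_mul]
      refine Finset.sum_congr rfl fun i _ => ?_
      rw [Finset.mul_sum, Finset.mul_sum]
      refine Finset.sum_congr rfl fun j _ => by ring
    rw [this]
    exact mul_self_nonneg _

lemma det_one_add_ge_one {M : Matrix n n ℝ} (hM : M.PosSemidef) :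
    1 ≤ (1 + M).det := by
  classical
  have hA := hM.1
  have hspec := hA.spectral_theorem
  set U : Matrix n n ℝ := (hA.eigenvectorUnitary : Matrix n n ℝ) with hU
  set D : Matrix n n ℝ := Matrix.diagonal (RCLike.ofReal ∘ hA.eigenvalues) with hD
  have hUU : U * star U = 1 := (Matrix.mem_unitaryGroup_iff).mp hA.eigenvectorUnitary.2
  have h2 : 1 + M = U * (1 + D) * star U := by
    rw [mul_add, add_mul, mul_one, hUU, hspec, Unitary.conjStarAlgAut_apply]
  rw [h2, det_mul, det_mul]
  have hdetU : U.det * (star U).det = 1 := by rw [← det_mul, hUU, det_one]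
  have hDdet : (1 + D).det = ∏ i, (1 + hA.eigenvalues i) := by
    rw [hD, ← diagonal_one, diagonal_add, det_diagonal]
    simp
  have h1 : (1:ℝ) ≤ (1 + D).det := by
    rw [hDdet]
    calc (1:ℝ) = ∏ _i : n, (1:ℝ) := by simp
      _ ≤ ∏ i, (1 + hA.eigenvalues i) :=
          Finset.prod_le_prod (fun i _ => by norm_num)
            (fun i _ => by linarith [hM.eigenvalues_nonneg i])
  calc (1:ℝ) ≤ (1 + D).det := h1
    _ = U.det * (1 + D).det * (star U).det := by
        rw [mul_comm U.det, mul_assoc, hdetU, mul_one]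

lemma det_mono_add {X Y : Matrix n n ℝ} (hX : X.PosDef) (hY : Y.PosSemidef) :
    X.det ≤ (X + Y).det := by
  classical
  set S := CFC.sqrt X with hSdef
  have hS : S.PosSemidef := (CFC.sqrt_nonneg X).posSemidef
  have hSS : S * S = X := CFC.sqrt_mul_sqrt_self X hX.posSemidef.nonneg
  have hdetX : 0 < X.det := hX.det_pos
  have hXSS : 0 < S.det * S.det := by rw [← det_mul, hSS]; exact hdetX
  have hdetS : 0 < S.det :=
    (posDef_of_det_ne_zero' hS (fun h => by simp [h] at hXSS)).det_pos
  have hdetS' : IsUnit S.det := isUnit_iff_ne_zero.mpr hdetS.ne'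
  have hSH : Sᴴ = S := hS.1
  have hSinvH : (S⁻¹)ᴴ = S⁻¹ := by rw [conjTranspose_nonsing_inv, hSH]
  have hM : (S⁻¹ * Y * S⁻¹).PosSemidef := by
    have := hY.conjTranspose_mul_mul_same (B := S⁻¹)
    rwa [hSinvH] at this
  have key : X + Y = S * (1 + S⁻¹ * Y * S⁻¹) * S := by
    rw [mul_add, add_mul, mul_one, hSS]
    congr 1
    rw [← mul_assoc, ← mul_assoc, Matrix.mul_nonsing_inv _ hdetS', one_mul,
      mul_assoc, Matrix.nonsing_inv_mul _ hdetS', mul_one]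
  rw [key, det_mul, det_mul]
  have h1 := det_one_add_ge_one hM
  have hXd : X.det = S.det * S.det := by rw [← det_mul, hSS]
  nlinarith [mul_nonneg (mul_nonneg (sub_nonneg.mpr h1) hdetS.le) hdetS.le]

end AuxMatrix

lemma schur_pkg {n : ℕ} {M : Matrix (Fin 1 ⊕ Fin n) (Fin 1 ⊕ Fin n) ℝ} (hM : M.PosSemidef)
    (ha : 0 < M (Sum.inl 0) (Sum.inl 0)) :
    M.det = M (Sum.inl 0) (Sum.inl 0) *
      (M.toBlocks₂₂ - (M (Sum.inl 0) (Sum.inl 0))⁻¹ •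
        vecMulVec (fun i => M (Sum.inr i) (Sum.inl 0)) (fun j => M (Sum.inr j) (Sum.inl 0))).det
    ∧ (M.toBlocks₂₂ - (M (Sum.inl 0) (Sum.inl 0))⁻¹ •
        vecMulVec (fun i => M (Sum.inr i) (Sum.inl 0)) (fun j => M (Sum.inr j) (Sum.inl 0))).PosSemidef := by
  classical
  set a : ℝ := M (Sum.inl 0) (Sum.inl 0) with hadef
  set c : Fin n → ℝ := fun i => M (Sum.inr i) (Sum.inl 0) with hcdef
  have hsymm : ∀ i j, M i j = M j i := by
    intro i j
    conv_lhs => rw [← hM.1]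
    simp [conjTranspose_apply]
  have h11 : M.toBlocks₁₁ = a • (1 : Matrix (Fin 1) (Fin 1) ℝ) := by
    ext i j
    have hi : i = 0 := Subsingleton.elim i 0
    have hj : j = 0 := Subsingleton.elim j 0
    subst hi; subst hj
    simp [toBlocks₁₁, one_apply, hadef]
  have h21 : M.toBlocks₂₁ = (M.toBlocks₁₂)ᴴ := by
    ext i j
    simp [toBlocks₂₁, toBlocks₁₂, conjTranspose_apply, hsymm (Sum.inr i) (Sum.inl j)]
  have h12e : ∀ j, M.toBlocks₁₂ 0 j = c j := by
    intro j
    simp [toBlocks₁₂, hcdef, hsymm (Sum.inl 0) (Sum.inr j)]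
  have hdet11 : (M.toBlocks₁₁).det = a := by
    rw [h11, det_fin_one]
    simp
  haveI : Invertible M.toBlocks₁₁ :=
    Matrix.invertibleOfIsUnitDet _ (by rw [hdet11]; exact isUnit_iff_ne_zero.mpr ha.ne')
  have hinv : (M.toBlocks₁₁)⁻¹ = a⁻¹ • (1 : Matrix (Fin 1) (Fin 1) ℝ) := by
    apply Matrix.inv_eq_right_inv
    rw [h11, Matrix.smul_mul, Matrix.mul_smul, smul_smul, mul_inv_cancel₀ ha.ne', one_smul,
      one_mul]
  have hterm : M.toBlocks₂₁ * (M.toBlocks₁₁)⁻¹ * M.toBlocks₁₂ = a⁻¹ • vecMulVec c c := by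
    rw [hinv]
    ext i j
    simp only [Matrix.mul_apply, Matrix.smul_apply, Matrix.one_apply, vecMulVec_apply,
      smul_eq_mul, Fin.sum_univ_one]
    rw [h12e j]
    simp only [Fin.sum_univ_one, smul_eq_mul, mul_ite, mul_one, mul_zero, if_pos rfl]
    have : M.toBlocks₂₁ i 0 = c i := by simp [toBlocks₂₁, hcdef]
    rw [this]
    simp only [if_pos trivial]
    ring
  constructor
  · conv_lhs => rw [← fromBlocks_toBlocks M]
    rw [Matrix.det_fromBlocks₁₁, Matrix.invOf_eq_nonsing_inv, hdet11, hterm]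
  · have hM' : (fromBlocks M.toBlocks₁₁ M.toBlocks₁₂ (M.toBlocks₁₂)ᴴ M.toBlocks₂₂).PosSemidef := by
      rw [← h21, fromBlocks_toBlocks]
      exact hM
    have hPD : (M.toBlocks₁₁).PosDef := by
      rw [h11, show (a • (1 : Matrix (Fin 1) (Fin 1) ℝ)) = diagonal (fun _ => a) by
        ext i j; fin_cases i; fin_cases j; simp]
      exact Matrix.posDef_diagonal_iff.mpr fun _ => ha
    have := (Matrix.PosDef.fromBlocks₁₁ M.toBlocks₁₂ M.toBlocks₂₂ hPD).mp hM'
    rwa [← h21, hterm] at this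

lemma blocks22_eq_submatrix {n : ℕ} (M : Matrix (Fin 1 ⊕ Fin n) (Fin 1 ⊕ Fin n) ℝ) :
    M.toBlocks₂₂ = M.submatrix Sum.inr Sum.inr := by
  ext i j; rfl

lemma prod_diag_sum {n : ℕ} (B : Matrix (Fin 1 ⊕ Fin n) (Fin 1 ⊕ Fin n) ℝ) :
    ∏ i, B i i = B (Sum.inl 0) (Sum.inl 0) * ∏ i, B.toBlocks₂₂ i i := by
  rw [Fintype.prod_sum_type, Fin.prod_univ_one]
  rfl

/-- Induction step for Oppenheim, on the sum type. -/
lemma oppenheim_step {n : ℕ} (A B : Matrix (Fin 1 ⊕ Fin n) (Fin 1 ⊕ Fin n) ℝ)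
    (hA : A.PosDef) (hB : B.PosDef)
    (IH : ∀ (A₀ B₀ : Matrix (Fin n) (Fin n) ℝ), A₀.PosDef → B₀.PosDef →
      A₀.det * ∏ i, B₀ i i ≤ (A₀.hadamard B₀).det) :
    A.det * ∏ i, B i i ≤ (A.hadamard B).det := by
  classical
  set a : ℝ := A (Sum.inl 0) (Sum.inl 0) with hadef
  set b : ℝ := B (Sum.inl 0) (Sum.inl 0) with hbdef
  set c : Fin n → ℝ := fun i => A (Sum.inr i) (Sum.inl 0) with hcdef
  set dv : Fin n → ℝ := fun i => B (Sum.inr i) (Sum.inl 0) with hdvdef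
  have ha : 0 < a := diag_pos' hA (Sum.inl 0)
  have hb : 0 < b := diag_pos' hB (Sum.inl 0)
  obtain ⟨hdetA, hSApsd⟩ := schur_pkg hA.posSemidef ha
  obtain ⟨hdetB, hSBpsd⟩ := schur_pkg hB.posSemidef hb
  set SA := A.toBlocks₂₂ - a⁻¹ • vecMulVec c c with hSAdef
  set SB := B.toBlocks₂₂ - b⁻¹ • vecMulVec dv dv with hSBdef
  have hSApd : SA.PosDef := by
    refine posDef_of_det_ne_zero' hSApsd fun h => ?_
    rw [h, mul_zero] at hdetA
    exact hA.det_pos.ne' hdetA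
  have hB2pd : B.toBlocks₂₂.PosDef := by
    rw [blocks22_eq_submatrix]
    exact posDef_submatrix_inj hB Sum.inr Sum.inr_injective
  -- the Hadamard product
  have hHpsd : (A.hadamard B).PosSemidef := posSemidef_hadamard hA.posSemidef hB.posSemidef
  have hHa : (A.hadamard B) (Sum.inl 0) (Sum.inl 0) = a * b := rfl
  obtain ⟨hdetH, _⟩ := schur_pkg hHpsd (by rw [hHa]; exact mul_pos ha hb)
  -- identity for the Schur complement of the Hadamard product
  set P := (a⁻¹ • vecMulVec c c).hadamard SB with hPdef
  set X := SA.hadamard B.toBlocks₂₂ with hXdef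
  have hkey : (A.hadamard B).toBlocks₂₂ -
      ((A.hadamard B) (Sum.inl 0) (Sum.inl 0))⁻¹ •
        vecMulVec (fun i => (A.hadamard B) (Sum.inr i) (Sum.inl 0))
          (fun j => (A.hadamard B) (Sum.inr j) (Sum.inl 0)) = X + P := by
    ext i j
    have e1 : (A.hadamard B) (Sum.inr i) (Sum.inl 0) = c i * dv i := rfl
    have e2 : (A.hadamard B) (Sum.inr j) (Sum.inl 0) = c j * dv j := rfl
    have e3 : (A.hadamard B).toBlocks₂₂ i j = A.toBlocks₂₂ i j * B.toBlocks₂₂ i j := rfl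
    simp only [Matrix.sub_apply, Matrix.add_apply, Matrix.smul_apply, vecMulVec_apply,
      Matrix.hadamard_apply, hHa, e1, e2, e3, smul_eq_mul, hXdef, hPdef, hSAdef, hSBdef]
    field_simp
    simp only [← hadef, ← hbdef]
    field_simp
    ring
  have hPpsd : P.PosSemidef :=
    posSemidef_hadamard (psd_smul' (psd_vecMulVec c) (inv_nonneg.mpr ha.le)) hSBpsd
  have hXpsd : X.PosSemidef := posSemidef_hadamard hSApd.posSemidef hB2pd.posSemidef
  have hIH : SA.det * ∏ i, B.toBlocks₂₂ i i ≤ X.det := IH SA B.toBlocks₂₂ hSApd hB2pd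
  have hprodB2 : 0 < ∏ i, B.toBlocks₂₂ i i :=
    Finset.prod_pos fun i _ => diag_pos' hB2pd i
  have hXpos : 0 < X.det := lt_of_lt_of_le (mul_pos hSApd.det_pos hprodB2) hIH
  have hXpd : X.PosDef := posDef_of_det_ne_zero' hXpsd hXpos.ne'
  rw [hkey, hHa] at hdetH
  calc A.det * ∏ i, B i i
      = (a * SA.det) * (b * ∏ i, B.toBlocks₂₂ i i) := by
        rw [hdetA, prod_diag_sum B]
    _ = (a * b) * (SA.det * ∏ i, B.toBlocks₂₂ i i) := by ring
    _ ≤ (a * b) * X.det := by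
        exact mul_le_mul_of_nonneg_left hIH (mul_pos ha hb).le
    _ ≤ (a * b) * (X + P).det :=
        mul_le_mul_of_nonneg_left (det_mono_add hXpd hPpsd) (mul_pos ha hb).le
    _ = (A.hadamard B).det := hdetH.symm

/-- Induction step for Hadamard's determinant inequality, on the sum type. -/
lemma hadamard_det_step {n : ℕ} (B : Matrix (Fin 1 ⊕ Fin n) (Fin 1 ⊕ Fin n) ℝ)
    (hB : B.PosDef)
    (IH : ∀ (B₀ : Matrix (Fin n) (Fin n) ℝ), B₀.PosDef → B₀.det ≤ ∏ i, B₀ i i) :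
    B.det ≤ ∏ i, B i i := by
  classical
  set b : ℝ := B (Sum.inl 0) (Sum.inl 0) with hbdef
  set dv : Fin n → ℝ := fun i => B (Sum.inr i) (Sum.inl 0) with hdvdef
  have hb : 0 < b := diag_pos' hB (Sum.inl 0)
  obtain ⟨hdetB, hSBpsd⟩ := schur_pkg hB.posSemidef hb
  set SB := B.toBlocks₂₂ - b⁻¹ • vecMulVec dv dv with hSBdef
  have hSBpd : SB.PosDef := by
    refine posDef_of_det_ne_zero' hSBpsd fun h => ?_
    rw [h, mul_zero] at hdetB
    exact hB.det_pos.ne' hdetB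
  have hB2pd : B.toBlocks₂₂.PosDef := by
    rw [blocks22_eq_submatrix]
    exact posDef_submatrix_inj hB Sum.inr Sum.inr_injective
  have hmono : SB.det ≤ B.toBlocks₂₂.det := by
    have := det_mono_add hSBpd (psd_smul' (psd_vecMulVec dv) (inv_nonneg.mpr hb.le))
    rwa [sub_add_cancel] at this
  calc B.det = b * SB.det := by rw [hdetB]
    _ ≤ b * B.toBlocks₂₂.det := mul_le_mul_of_nonneg_left hmono hb.le
    _ ≤ b * ∏ i, B.toBlocks₂₂ i i :=
        mul_le_mul_of_nonneg_left (IH _ hB2pd) hb.le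
    _ = ∏ i, B i i := (prod_diag_sum B).symm

def transfer_equiv {n : ℕ} : (Fin 1 ⊕ Fin n) ≃ Fin (n + 1) :=
  finSumFinEquiv.trans (finCongr (Nat.add_comm 1 n))

/-- Hadamard's determinant inequality. -/
lemma hadamard_det_ineq : ∀ (n : ℕ) (B : Matrix (Fin n) (Fin n) ℝ), B.PosDef →
    B.det ≤ ∏ i, B i i := by
  intro n
  induction n with
  | zero => intro B _; simp [Matrix.det_fin_zero]
  | succ n IH =>
    intro B hB
    set e : (Fin 1 ⊕ Fin n) ≃ Fin (n + 1) := transfer_equiv with he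
    have h1 : B.det = (B.submatrix e e).det := (Matrix.det_submatrix_equiv_self e B).symm
    have h2 : ∏ i, B i i = ∏ i, (B.submatrix e e) i i := by
      rw [← Equiv.prod_comp e (fun j => B j j)]
      rfl
    rw [h1, h2]
    exact hadamard_det_step _ (posDef_submatrix_inj hB e e.injective) IH

/-- Oppenheim's inequality. -/
lemma oppenheim_ineq : ∀ (n : ℕ) (A B : Matrix (Fin n) (Fin n) ℝ), A.PosDef → B.PosDef →
    A.det * ∏ i, B i i ≤ (A.hadamard B).det := by
  intro n
  induction n with
  | zero => intro A B _ _; simp [Matrix.det_fin_zero]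
  | succ n IH =>
    intro A B hA hB
    set e : (Fin 1 ⊕ Fin n) ≃ Fin (n + 1) := transfer_equiv with he
    have h1 : A.det = (A.submatrix e e).det := (Matrix.det_submatrix_equiv_self e A).symm
    have h2 : ∏ i, B i i = ∏ i, (B.submatrix e e) i i := by
      rw [← Equiv.prod_comp e (fun j => B j j)]
      rfl
    have h3 : (A.hadamard B).det = ((A.submatrix e e).hadamard (B.submatrix e e)).det := by
      rw [show (A.submatrix e e).hadamard (B.submatrix e e) = (A.hadamard B).submatrix e e from
        by ext i j; rfl, Matrix.det_submatrix_equiv_self]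
    rw [h1, h2, h3]
    exact oppenheim_step _ _ (posDef_submatrix_inj hA e e.injective)
      (posDef_submatrix_inj hB e e.injective) IH

theorem joint_tcr_superadditive {d : ℕ} (hd : 0 < d) (μ : ℝ) (hμ : 0 < μ)
    (K₁ K₂ : Matrix (Fin d) (Fin d) ℝ)
    (hK₁ : K₁.PosSemidef) (hK₂ : K₂.PosSemidef)
    (hdiag₁ : ∀ i, K₁ i i = 1) (hdiag₂ : ∀ i, K₂ i i = 1) :
    Real.log (μ • (1 : Matrix (Fin d) (Fin d) ℝ) + K₁).det
      + Real.log (μ • (1 : Matrix (Fin d) (Fin d) ℝ) + K₂).det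
    ≤ Real.log ((μ ^ 2 + 2 * μ) • (1 : Matrix (Fin d) (Fin d) ℝ) + K₁.hadamard K₂).det := by
  classical
  set A := μ • (1 : Matrix (Fin d) (Fin d) ℝ) + K₁ with hAdef
  set B := μ • (1 : Matrix (Fin d) (Fin d) ℝ) + K₂ with hBdef
  have hsmulpd : (μ • (1 : Matrix (Fin d) (Fin d) ℝ)).PosDef := by
    rw [show μ • (1 : Matrix (Fin d) (Fin d) ℝ) = diagonal (fun _ => μ) from by
      ext i j; by_cases h : i = j <;> simp [h, one_apply, diagonal]]
    exact Matrix.posDef_diagonal_iff.mpr fun _ => hμ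
  have hA : A.PosDef := hsmulpd.add_posSemidef hK₁
  have hB : B.PosDef := hsmulpd.add_posSemidef hK₂
  have hhad : A.hadamard B = (μ ^ 2 + 2 * μ) • (1 : Matrix (Fin d) (Fin d) ℝ) + K₁.hadamard K₂ := by
    ext i j
    by_cases h : i = j
    · subst h
      simp [hAdef, hBdef, Matrix.hadamard_apply, Matrix.add_apply, Matrix.smul_apply,
        one_apply, hdiag₁ i, hdiag₂ i]
      ring
    · simp [hAdef, hBdef, Matrix.hadamard_apply, Matrix.add_apply, Matrix.smul_apply,
        one_apply, h]
  have hdiagB : ∀ i, B i i = μ + 1 := fun i => by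
    simp [hBdef, Matrix.add_apply, Matrix.smul_apply, one_apply, hdiag₂ i]
  have hchain : A.det * B.det ≤ (A.hadamard B).det := by
    calc A.det * B.det ≤ A.det * ∏ i, B i i :=
          mul_le_mul_of_nonneg_left (hadamard_det_ineq d B hB) hA.det_pos.le
      _ ≤ (A.hadamard B).det := oppenheim_ineq d A B hA hB
  rw [← hhad, ← Real.log_mul hA.det_pos.ne' hB.det_pos.ne']
  exact Real.log_le_log (mul_pos hA.det_pos hB.det_pos) hchain
end
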